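/- Fix N ≥ 1. On the (2N+2)-qubit space, let H_p = −( Σ_{i=1}^{N+1} X_{2i−1}X_{2i} + Σ_{i=1}^{N} Z_{2i}Z_{2i+1} + Z_{2N+2}Z₁ ). For each choice of signs s_x, s_z ∈ {−1, +1}, define on the N-qubit space the Hamiltonian H(s_x, s_z) = −( Σ_{i=1}^{N} X_i + s_x·Π_{i=1}^{N} X_i + Z₁ + Σ_{i=1}^{N−1} Z_i Z_{i+1} + s_z·Z_N ), where Π_{i=1}^{N} X_i is the product X₁X₂⋯X_N. Then the spectrum (set of eigenvalues) of H_p equals the union over the four sign choices (s_x, s_z) ∈ {−1,+1}² of the spectra of H(s_x, s_z). -/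

import Mathlib

/-- The Pauli matrix `X`. -/
def pauliX : Matrix (Fin 2) (Fin 2) ℂ := !![0, 1; 1, 0]

/-- The Pauli matrix `Z`. -/
def pauliZ : Matrix (Fin 2) (Fin 2) ℂ := !![1, 0; 0, -1]

/-- The `n`-qubit operator acting as the 2×2 matrix `P` on qubit `j` and as the
identity on every other qubit (the Kronecker product `I ⊗ ⋯ ⊗ P ⊗ ⋯ ⊗ I`). -/
noncomputable def pauliAt {n : ℕ} (P : Matrix (Fin 2) (Fin 2) ℂ) (j : Fin n) :
    Matrix (Fin n → Fin 2) (Fin n → Fin 2) ℂ :=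
  Matrix.of fun v w => ∏ i, if i = j then P (v i) (w i) else (if v i = w i then 1 else 0)

set_option maxHeartbeats 1000000

namespace PenaltyAux
open Matrix Kronecker

def zsign (a : Fin 2) : ℂ := if a = 0 then 1 else -1

lemma fin2cases (a : Fin 2) : a = 0 ∨ a = 1 := by omega
lemma zsign_add (a b : Fin 2) : zsign (a + b) = zsign a * zsign b := by
  rcases fin2cases a with h | h <;> rcases fin2cases b with h' | h' <;>
    subst h <;> subst h' <;>
    simp (config := { decide := true }) only [zsign, if_true, if_false] <;> norm_num
lemma pauliX_apply (a b : Fin 2) : pauliX a b = if b = a + 1 then 1 else 0 := by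
  rcases fin2cases a with h | h <;> rcases fin2cases b with h' | h' <;>
    subst h <;> subst h' <;>
    simp (config := { decide := true }) only [if_true, if_false] <;> norm_num [pauliX]
lemma pauliZ_apply (a b : Fin 2) : pauliZ a b = if a = b then zsign a else 0 := by
  rcases fin2cases a with h | h <;> rcases fin2cases b with h' | h' <;>
    subst h <;> subst h' <;>
    simp (config := { decide := true }) only [zsign, if_true, if_false] <;> norm_num [pauliZ]
lemma had_lemma : pauliX * !![(1:ℂ),1;1,-1] = !![(1:ℂ),1;1,-1] * pauliZ := by
  norm_num [pauliX, pauliZ, Matrix.mul_fin_two]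
lemma had_had : !![(1:ℂ),1;1,-1] * !![(1:ℂ),1;1,-1] = (2:ℂ) • 1 := by
  rw [Matrix.one_fin_two, Matrix.smul_of]
  norm_num [Matrix.mul_fin_two, Matrix.smul_cons, Matrix.smul_empty]

abbrev Bits (n : ℕ) := Fin n → Fin 2
abbrev Sec (N : ℕ) := Fin 2 × Fin 2 × Bits N
abbrev Idx (N : ℕ) := Bits N × Sec N
def Wlt {N : ℕ} (w : Bits N) (k : ℕ) : Fin 2 := ∑ t : Fin N, if (t : ℕ) < k then w t else 0
def sig (N : ℕ) (x : Idx N) : Bits (2 * N + 2) := fun j =>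
  if _ : (j : ℕ) = 2 * N + 1 then x.2.2.1
  else if _ : (j : ℕ) = 2 * N then x.2.1 + x.2.2.1 + Wlt x.2.2.2 N
  else x.1 ⟨(j : ℕ) / 2, by omega⟩ + x.2.2.1 + Wlt x.2.2.2 ((j : ℕ) / 2 + (j : ℕ) % 2)
lemma Wlt_succ {N : ℕ} (w : Bits N) (k : ℕ) (hk : k < N) :
    Wlt w (k + 1) = Wlt w k + w ⟨k, hk⟩ := by
  have : ∀ t : Fin N, (if (t : ℕ) < k + 1 then w t else 0) =
      (if (t : ℕ) < k then w t else 0) + (if t = ⟨k, hk⟩ then w t else 0) := by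
    intro t
    rcases lt_trichotomy (t : ℕ) k with h | h | h
    · rw [if_pos (by omega), if_pos h, if_neg (by simp [Fin.ext_iff]; omega), add_zero]
    · rw [if_pos (by omega), if_neg (by omega), if_pos (by simp [Fin.ext_iff, h]), zero_add]
    · rw [if_neg (by omega), if_neg (by omega), if_neg (by simp [Fin.ext_iff]; omega), add_zero]
  rw [Wlt, Finset.sum_congr rfl (fun t _ => this t), Finset.sum_add_distrib]
  congr 1
  · simp [Finset.sum_ite_eq']
lemma Wlt_add {N : ℕ} (w w' : Bits N) (k : ℕ) :
    Wlt (w + w') k = Wlt w k + Wlt w' k := by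
  simp only [Wlt, ← Finset.sum_add_distrib]
  refine Finset.sum_congr rfl fun t _ => ?_
  by_cases h : (t : ℕ) < k <;> simp [h]
lemma Wlt_zero {N : ℕ} (k : ℕ) : Wlt (0 : Bits N) k = 0 := by simp [Wlt]
lemma Wlt_zero' {N : ℕ} (w : Bits N) : Wlt w 0 = 0 := by simp [Wlt]
lemma sig_add (N : ℕ) (x y : Idx N) : sig N (x + y) = sig N x + sig N y := by
  funext j
  simp only [sig, Pi.add_apply]
  split_ifs with h1 h2
  · rfl
  · show _ + _ + Wlt _ _ = _
    rw [show (x + y).2.1 = x.2.1 + y.2.1 from rfl, show (x + y).2.2.1 = x.2.2.1 + y.2.2.1 from rfl,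
      show (x + y).2.2.2 = x.2.2.2 + y.2.2.2 from rfl, Wlt_add]
    abel
  · show _ + _ + Wlt _ _ = _
    rw [show (x + y).1 ⟨(j:ℕ)/2, by omega⟩ = x.1 _ + y.1 _ from rfl,
      show (x + y).2.2.1 = x.2.2.1 + y.2.2.1 from rfl,
      show (x + y).2.2.2 = x.2.2.2 + y.2.2.2 from rfl, Wlt_add]
    abel
lemma sig_odd {N : ℕ} (x : Idx N) (k : Fin N) :
    sig N x ⟨2 * (k : ℕ) + 1, by omega⟩ = x.1 k + x.2.2.1 + Wlt x.2.2.2 ((k : ℕ) + 1) := by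
  have hk := k.isLt
  rw [sig, dif_neg (by simp; omega), dif_neg (by simp; omega)]
  have h2 : (2 * (k : ℕ) + 1) / 2 = (k : ℕ) := by omega
  have h3 : (2 * (k : ℕ) + 1) % 2 = 1 := by omega
  simp only [h2, h3, Fin.eta]
lemma sig_even {N : ℕ} (x : Idx N) (k : Fin N) :
    sig N x ⟨2 * (k : ℕ), by omega⟩ = x.1 k + x.2.2.1 + Wlt x.2.2.2 (k : ℕ) := by
  have hk := k.isLt
  rw [sig, dif_neg (by simp; omega), dif_neg (by simp; omega)]
  have h2 : (2 * (k : ℕ)) / 2 = (k : ℕ) := by omega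
  have h3 : (2 * (k : ℕ)) % 2 = 0 := by omega
  simp only [h2, h3, Fin.eta, add_zero]
lemma twoN_lt (N : ℕ) : 2 * N < 2 * N + 2 := by omega
lemma zero_lt_two' (N : ℕ) : 0 < 2 * N + 2 := by omega
lemma top_lt (N : ℕ) : 2 * N + 1 < 2 * N + 2 := by omega
lemma odd_lt {N : ℕ} (i : Fin N) : 2 * (i : ℕ) + 1 < 2 * N + 2 := by have := i.isLt; omega
lemma sig_top {N : ℕ} (x : Idx N) :
    sig N x ⟨2 * N + 1, top_lt N⟩ = x.2.2.1 := by
  rw [sig, dif_pos (by simp)]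
lemma sig_2N {N : ℕ} (x : Idx N) :
    sig N x ⟨2 * N, by omega⟩ = x.2.1 + x.2.2.1 + Wlt x.2.2.2 N := by
  rw [sig, dif_neg (by simp), dif_pos (by simp)]
lemma sig_inj (N : ℕ) : Function.Injective (sig N) := by
  intro x y h
  obtain ⟨xu, xq, xc, xw⟩ := x
  obtain ⟨yu, yq, yc, yw⟩ := y
  have hc : xc = yc := by
    have := congrFun h ⟨2 * N + 1, by omega⟩
    rwa [sig_top, sig_top] at this
  have heven : ∀ k : Fin N, xu k + xc + Wlt xw (k : ℕ) = yu k + yc + Wlt yw (k : ℕ) := by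
    intro k
    have := congrFun h ⟨2 * (k : ℕ), by omega⟩
    rwa [sig_even, sig_even] at this
  have hodd : ∀ k : Fin N, xu k + xc + Wlt xw ((k : ℕ) + 1) = yu k + yc + Wlt yw ((k : ℕ) + 1) := by
    intro k
    have := congrFun h ⟨2 * (k : ℕ) + 1, by omega⟩
    rwa [sig_odd, sig_odd] at this
  have hwe : xw = yw := by
    funext k
    have e1 := heven k
    have e2 := hodd k
    rw [Wlt_succ xw _ k.isLt, Wlt_succ yw _ k.isLt,
      ← add_assoc, ← add_assoc, e1] at e2
    exact add_left_cancel e2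
  have hue : xu = yu := by
    funext k
    have e1 := heven k
    rw [hwe, hc] at e1
    exact add_right_cancel (add_right_cancel e1)
  have hq : xq = yq := by
    have := congrFun h ⟨2 * N, by omega⟩
    rw [sig_2N, sig_2N] at this
    rw [hwe, hc] at this
    exact add_right_cancel (add_right_cancel this)
  simp [hc, hwe, hue, hq]
lemma sig_bij (N : ℕ) : Function.Bijective (sig N) := by
  rw [Fintype.bijective_iff_injective_and_card]
  refine ⟨sig_inj N, ?_⟩
  simp only [Fintype.card_prod, Fintype.card_fun, Fintype.card_fin]
  ring


def had : Matrix (Fin 2) (Fin 2) ℂ := !![1, 1; 1, -1]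

def Fm {n : ℕ} (t : Bits n) : Matrix (Bits n) (Bits n) ℂ :=
  Matrix.of fun v w => if w = v + t then 1 else 0

def F2 (t : Fin 2) : Matrix (Fin 2) (Fin 2) ℂ :=
  Matrix.of fun a b => if b = a + t then 1 else 0

lemma F2_zero : F2 0 = 1 := by
  ext a b
  simp [F2, one_apply, eq_comm]

lemma F2_one : F2 1 = pauliX := by
  ext a b
  rw [pauliX_apply]
  rfl

lemma Fm_zero {n : ℕ} : Fm (0 : Bits n) = 1 := by
  ext v w
  simp [Fm, one_apply, eq_comm]

lemma Fm_mul {n : ℕ} (s t : Bits n) : Fm s * Fm t = Fm (s + t) := by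
  ext v w
  simp only [Fm, mul_apply, of_apply, ite_mul, one_mul, zero_mul]
  rw [Finset.sum_ite_eq' Finset.univ (v + s) (fun z => if w = z + t then (1:ℂ) else 0)]
  simp [add_assoc]

lemma pauliAt_apply {n : ℕ} (P : Matrix (Fin 2) (Fin 2) ℂ) (j : Fin n) (v w : Bits n) :
    pauliAt P j v w
      = P (v j) (w j) * ∏ i ∈ Finset.univ.erase j, (if v i = w i then (1:ℂ) else 0) := by
  rw [pauliAt, of_apply, ← Finset.mul_prod_erase Finset.univ _ (Finset.mem_univ j)]
  simp only [if_pos rfl]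
  congr 1
  refine Finset.prod_congr rfl fun i hi => ?_
  rw [if_neg (Finset.mem_erase.mp hi).1]

lemma unit_ne_self (a : Fin 2) : a ≠ a + 1 := by omega

lemma eq_add_one_of_ne {a b : Fin 2} (h : a ≠ b) : b = a + 1 := by omega

lemma pauliAt_X {n : ℕ} (j : Fin n) :
    pauliAt pauliX j = Fm (fun i => if i = j then 1 else 0) := by
  ext v w
  rw [pauliAt_apply, Finset.prod_boole]
  simp only [Fm, of_apply]
  by_cases h : w = v + fun i => if i = j then 1 else 0
  · have hj : w j = v j + 1 := by rw [h]; simp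
    have hothers : ∀ i ∈ Finset.univ.erase j, v i = w i := by
      intro i hi
      have hne : i ≠ j := (Finset.mem_erase.mp hi).1
      rw [h]; simp [hne]
    rw [if_pos h, if_pos hothers, hj, pauliX_apply, if_pos rfl, mul_one]
  · rw [if_neg h]
    by_cases hj : w j = v j
    · rw [hj, pauliX_apply, if_neg (fun hh => unit_ne_self (v j) hh), zero_mul]
    · have hex : ¬ (∀ i ∈ Finset.univ.erase j, v i = w i) := by
        intro hall
        apply h
        funext i
        by_cases hij : i = j
        · subst hij
          simp only [Pi.add_apply, if_pos rfl]
          exact eq_add_one_of_ne (fun hh => hj hh.symm)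
        · simp only [Pi.add_apply, if_neg hij, add_zero]
          exact (hall i (Finset.mem_erase.mpr ⟨hij, Finset.mem_univ i⟩)).symm
      rw [if_neg hex, mul_zero]

lemma pauliAt_Z {n : ℕ} (j : Fin n) :
    pauliAt pauliZ j = Matrix.diagonal (fun v => zsign (v j)) := by
  ext v w
  rw [pauliAt_apply, Finset.prod_boole, diagonal_apply]
  by_cases h : v = w
  · subst h
    rw [if_pos rfl, if_pos (fun _ _ => rfl), pauliZ_apply, if_pos rfl, mul_one]
  · rw [if_neg h]
    by_cases hj : v j = w j
    · have hex : ¬ (∀ i ∈ Finset.univ.erase j, v i = w i) := by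
        intro hall
        apply h
        funext i
        by_cases hij : i = j
        · subst hij; exact hj
        · exact hall i (Finset.mem_erase.mpr ⟨hij, Finset.mem_univ i⟩)
      rw [if_neg hex, mul_zero]
    · rw [pauliZ_apply, if_neg hj, zero_mul]

lemma boole_and (p q : Prop) [Decidable p] [Decidable q] :
    (if p ∧ q then (1:ℂ) else 0) = (if p then 1 else 0) * (if q then 1 else 0) := by
  by_cases hp : p <;> by_cases hq : q <;> simp [hp, hq]

/-- transported flip matrix in kronecker shape -/
lemma flip_kron {N : ℕ} (d : Idx N) :
    Matrix.of (fun x y : Idx N => if y = x + d then (1:ℂ) else 0)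
      = Fm d.1 ⊗ₖ (F2 d.2.1 ⊗ₖ (F2 d.2.2.1 ⊗ₖ Fm d.2.2.2)) := by
  ext x y
  obtain ⟨xu, xq, xc, xw⟩ := x
  obtain ⟨yu, yq, yc, yw⟩ := y
  obtain ⟨du, dq, dc, dw⟩ := d
  simp only [kroneckerMap_apply, of_apply, Fm, F2]
  rw [if_congr (show ((yu, yq, yc, yw) = (xu, xq, xc, xw) + (du, dq, dc, dw))
      ↔ (yu = xu + du ∧ (yq = xq + dq ∧ (yc = xc + dc ∧ yw = xw + dw))) by
    simp [Prod.ext_iff, and_assoc]) rfl rfl]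
  rw [boole_and, boole_and, boole_and]

lemma Fm_submatrix {N : ℕ} (d : Idx N) :
    (Fm (sig N d)).submatrix (sig N) (sig N)
      = Fm d.1 ⊗ₖ (F2 d.2.1 ⊗ₖ (F2 d.2.2.1 ⊗ₖ Fm d.2.2.2)) := by
  rw [← flip_kron]
  ext x y
  simp only [submatrix_apply, Fm, of_apply, ← sig_add]
  rw [if_congr ((sig_inj N).eq_iff) rfl rfl]

lemma diag_submatrixP {N : ℕ} (χ : Bits (2*N+2) → ℂ) :
    (Matrix.diagonal χ).submatrix (sig N) (sig N) = Matrix.diagonal (χ ∘ sig N) :=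
  Matrix.submatrix_diagonal χ (sig N) (sig_inj N)

lemma diag_kron_UQ {N : ℕ} (a : Bits N → ℂ) (b : Fin 2 → ℂ) :
    Matrix.diagonal (fun x : Idx N => a x.1 * b x.2.1)
      = Matrix.diagonal a ⊗ₖ (Matrix.diagonal b ⊗ₖ (1 : Matrix (Fin 2 × Bits N) (Fin 2 × Bits N) ℂ)) := by
  rw [← Matrix.diagonal_one, diagonal_kronecker_diagonal, diagonal_kronecker_diagonal]
  congr 1
  funext x
  simp [mul_one]

lemma diag_kron_U {N : ℕ} (a : Bits N → ℂ) :
    Matrix.diagonal (fun x : Idx N => a x.1)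
      = Matrix.diagonal a ⊗ₖ (1 : Matrix (Sec N) (Sec N) ℂ) := by
  rw [← Matrix.diagonal_one, diagonal_kronecker_diagonal]
  congr 1
  funext x
  simp [mul_one]

lemma blockDiagonal_const {o m : Type*} [Fintype o] [DecidableEq o] [Fintype m] [DecidableEq m]
    (A : Matrix m m ℂ) :
    Matrix.blockDiagonal (fun _ : o => A) = A ⊗ₖ (1 : Matrix o o ℂ) := by
  ext ⟨i, a⟩ ⟨j, b⟩
  simp only [blockDiagonal_apply, kroneckerMap_apply, one_apply]
  by_cases h : a = b <;> simp [h]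

lemma blockDiagonal_smulfun {o m : Type*} [Fintype o] [DecidableEq o] [Fintype m] [DecidableEq m]
    (c : o → ℂ) (A : Matrix m m ℂ) :
    Matrix.blockDiagonal (fun s : o => c s • A) = A ⊗ₖ (Matrix.diagonal c) := by
  ext ⟨i, a⟩ ⟨j, b⟩
  simp only [blockDiagonal_apply, kroneckerMap_apply, diagonal_apply, Matrix.smul_apply, smul_eq_mul]
  by_cases h : a = b <;> simp [h, mul_comm]

def unitV {n : ℕ} (j : Fin n) : Bits n := fun i => if i = j then 1 else 0

lemma pauliAt_X' {n : ℕ} (j : Fin n) : pauliAt pauliX j = Fm (unitV j) := pauliAt_X j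

lemma pauliZ_diag : pauliZ = Matrix.diagonal zsign := by
  ext a b
  rw [pauliZ_apply, diagonal_apply]

lemma zsign_mul_add (a b e : Fin 2) : zsign (a + e) * zsign (b + e) = zsign a * zsign b := by
  rcases fin2cases a with h | h <;> rcases fin2cases b with h' | h' <;>
    rcases fin2cases e with h'' | h'' <;> subst h <;> subst h' <;> subst h'' <;>
    simp (config := { decide := true }) only [zsign, if_true, if_false] <;> norm_num

lemma zsign_sw (c a : Fin 2) : zsign c * zsign (a + c) = zsign a := by
  rcases fin2cases a with h | h <;> rcases fin2cases c with h'' | h'' <;>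
    subst h <;> subst h'' <;>
    simp (config := { decide := true }) only [zsign, if_true, if_false] <;> norm_num

lemma mkne {n a b : ℕ} (ha : a < n) (hb : b < n) (h : ¬ a = b) :
    ¬ (⟨a, ha⟩ : Fin n) = ⟨b, hb⟩ := fun hh => h (congrArg Fin.val hh)

lemma mkeq {n a b : ℕ} (ha : a < n) (hb : b < n) (h : a = b) :
    (⟨a, ha⟩ : Fin n) = ⟨b, hb⟩ := Fin.ext h

lemma sig_unit {N : ℕ} (i : Fin N) :
    sig N ((unitV i, 0, 0, 0) : Idx N)
      = unitV ⟨2*(i:ℕ), by have := i.isLt; omega⟩ + unitV ⟨2*(i:ℕ)+1, odd_lt i⟩ := by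
  have hi := i.isLt
  funext j
  have hj := j.isLt
  by_cases h1 : (j : ℕ) = 2*N+1
  · rw [show j = ⟨2*N+1, by omega⟩ from Fin.ext h1, sig_top]
    show (0 : Fin 2) = _ + _
    simp only [unitV]
    rw [if_neg (mkne _ _ (by omega)), if_neg (mkne _ _ (by omega))]
    decide
  · by_cases h2 : (j : ℕ) = 2*N
    · rw [show j = ⟨2*N, by omega⟩ from Fin.ext h2, sig_2N]
      show (0 : Fin 2) + 0 + Wlt 0 N = _ + _
      simp only [Wlt_zero, unitV]
      rw [if_neg (mkne _ _ (by omega)), if_neg (mkne _ _ (by omega))]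
      decide
    · have hlt : (j : ℕ) < 2*N := by omega
      by_cases hp : (j : ℕ) % 2 = 0
      · rw [show j = ⟨2*((j:ℕ)/2), by omega⟩ from
          Fin.ext (show (j:ℕ) = 2*((j:ℕ)/2) from by omega),
          sig_even _ ⟨(j:ℕ)/2, by omega⟩]
        show unitV i ⟨(j:ℕ)/2, by omega⟩ + 0 + Wlt 0 ((j:ℕ)/2) = _ + _
        simp only [Wlt_zero, unitV]
        by_cases hji : (j:ℕ)/2 = (i:ℕ)
        · rw [if_pos (Fin.ext hji), if_pos (mkeq _ _ (by omega)), if_neg (mkne _ _ (by omega))]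
          decide
        · rw [if_neg (fun hh => hji (congrArg Fin.val hh)), if_neg (mkne _ _ (by omega)),
            if_neg (mkne _ _ (by omega))]
          decide
      · rw [show j = ⟨2*((j:ℕ)/2)+1, by omega⟩ from
          Fin.ext (show (j:ℕ) = 2*((j:ℕ)/2)+1 from by omega),
          sig_odd _ ⟨(j:ℕ)/2, by omega⟩]
        show unitV i ⟨(j:ℕ)/2, by omega⟩ + 0 + Wlt 0 ((j:ℕ)/2+1) = _ + _
        simp only [Wlt_zero, unitV]
        by_cases hji : (j:ℕ)/2 = (i:ℕ)
        · rw [if_pos (Fin.ext hji), if_neg (mkne _ _ (by omega)), if_pos (mkeq _ _ (by omega))]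
          decide
        · rw [if_neg (fun hh => hji (congrArg Fin.val hh)), if_neg (mkne _ _ (by omega)),
            if_neg (mkne _ _ (by omega))]
          decide

lemma sig_allone {N : ℕ} :
    sig N (((fun _ => 1), 0, 1, 0) : Idx N)
      = unitV ⟨2*N, twoN_lt N⟩ + unitV ⟨2*N+1, top_lt N⟩ := by
  funext j
  have hj := j.isLt
  by_cases h1 : (j : ℕ) = 2*N+1
  · rw [show j = ⟨2*N+1, by omega⟩ from Fin.ext h1, sig_top]
    show (1 : Fin 2) = _ + _
    simp only [unitV]
    rw [if_neg (mkne _ _ (by omega))]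
    decide
  · by_cases h2 : (j : ℕ) = 2*N
    · rw [show j = ⟨2*N, by omega⟩ from Fin.ext h2, sig_2N]
      show (0 : Fin 2) + 1 + Wlt 0 N = _ + _
      simp only [Wlt_zero, unitV]
      rw [if_neg (mkne _ _ (by omega))]
      decide
    · have hlt : (j : ℕ) < 2*N := by omega
      by_cases hp : (j : ℕ) % 2 = 0
      · rw [show j = ⟨2*((j:ℕ)/2), by omega⟩ from
          Fin.ext (show (j:ℕ) = 2*((j:ℕ)/2) from by omega),
          sig_even _ ⟨(j:ℕ)/2, by omega⟩]
        show (1 : Fin 2) + 1 + Wlt 0 ((j:ℕ)/2) = _ + _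
        simp only [Wlt_zero, unitV]
        rw [if_neg (mkne _ _ (by omega)), if_neg (mkne _ _ (by omega))]
        decide
      · rw [show j = ⟨2*((j:ℕ)/2)+1, by omega⟩ from
          Fin.ext (show (j:ℕ) = 2*((j:ℕ)/2)+1 from by omega),
          sig_odd _ ⟨(j:ℕ)/2, by omega⟩]
        show (1 : Fin 2) + 1 + Wlt 0 ((j:ℕ)/2+1) = _ + _
        simp only [Wlt_zero, unitV]
        rw [if_neg (mkne _ _ (by omega)), if_neg (mkne _ _ (by omega))]
        decide

lemma chi_B {N : ℕ} (i j : Fin N) (hij : (j:ℕ) = (i:ℕ)+1) (x : Idx N) :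
    zsign (sig N x ⟨2*(i:ℕ)+1, by omega⟩) * zsign (sig N x ⟨2*(i:ℕ)+2, by have := j.isLt; omega⟩)
      = zsign (x.1 i) * zsign (x.1 j) := by
  rw [show (⟨2*(i:ℕ)+2, by have := j.isLt; omega⟩ : Fin (2*N+2)) = ⟨2*(j:ℕ), by omega⟩ from
    by simp only [Fin.mk.injEq]; omega, sig_odd, sig_even, hij, add_assoc, add_assoc,
    zsign_mul_add]

lemma chi_Blast {N : ℕ} (hN : 0 < N) (x : Idx N) :
    zsign (sig N x ⟨2*(N-1)+1, by omega⟩) * zsign (sig N x ⟨2*(N-1)+2, by omega⟩)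
      = zsign (x.1 ⟨N-1, by omega⟩) * zsign x.2.1 := by
  rw [show (⟨2*(N-1)+1, by omega⟩ : Fin (2*N+2))
      = ⟨2*((⟨N-1, by omega⟩ : Fin N):ℕ)+1, by omega⟩ from rfl,
    show (⟨2*(N-1)+2, by omega⟩ : Fin (2*N+2)) = ⟨2*N, by omega⟩ from
      by simp only [Fin.mk.injEq]; omega,
    sig_odd, sig_2N,
    show (((⟨N-1, by omega⟩ : Fin N) : ℕ) + 1) = N from by show N-1+1 = N; omega,
    add_assoc, add_assoc, zsign_mul_add]

lemma chi_C {N : ℕ} (hN : 0 < N) (x : Idx N) :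
    zsign (sig N x ⟨2*N+1, top_lt N⟩) * zsign (sig N x ⟨0, zero_lt_two' N⟩)
      = zsign (x.1 ⟨0, hN⟩) := by
  rw [sig_top, show (⟨0, by omega⟩ : Fin (2*N+2)) = ⟨2*((⟨0, hN⟩ : Fin N):ℕ), by omega⟩ from
    rfl, sig_even]
  rw [show ((⟨0, hN⟩ : Fin N):ℕ) = 0 from rfl, Wlt_zero', add_zero, zsign_sw]

def KS (N : ℕ) : Matrix (Sec N) (Sec N) ℂ :=
  (1 : Matrix (Fin 2) (Fin 2) ℂ) ⊗ₖ (had ⊗ₖ (1 : Matrix (Bits N) (Bits N) ℂ))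

def Km (N : ℕ) : Matrix (Idx N) (Idx N) ℂ := (1 : Matrix (Bits N) (Bits N) ℂ) ⊗ₖ KS N

lemma had_had' : had * had = (2:ℂ) • 1 := by
  rw [had, Matrix.one_fin_two, Matrix.smul_of]
  norm_num [Matrix.mul_fin_two, Matrix.smul_cons, Matrix.smul_empty]

lemma had_XZ : pauliX * had = had * pauliZ := by
  norm_num [pauliX, pauliZ, had, Matrix.mul_fin_two]

lemma Km_Km {N : ℕ} : Km N * Km N = (2:ℂ) • 1 := by
  rw [Km, KS, ← mul_kronecker_mul, ← mul_kronecker_mul, ← mul_kronecker_mul, had_had']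
  simp only [one_mul, mul_one, Matrix.smul_kronecker, Matrix.kronecker_smul,
    Matrix.one_kronecker_one]

lemma det_Km_ne {N : ℕ} : (Km N).det ≠ 0 := by
  have h := congrArg Matrix.det (Km_Km (N := N))
  rw [Matrix.det_mul, Matrix.det_smul, Matrix.det_one, mul_one] at h
  intro h0
  rw [h0, mul_zero] at h
  have := pow_ne_zero (Fintype.card (Idx N)) (two_ne_zero (α := ℂ))
  exact this h.symm

lemma commK_A {N : ℕ} (A : Matrix (Bits N) (Bits N) ℂ) :
    (A ⊗ₖ (1 : Matrix (Sec N) (Sec N) ℂ)) * Km N = Km N * (A ⊗ₖ 1) := by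
  rw [Km, ← mul_kronecker_mul, ← mul_kronecker_mul]
  simp only [one_mul, mul_one]

lemma commK_X {N : ℕ} (A : Matrix (Bits N) (Bits N) ℂ) :
    (A ⊗ₖ ((1 : Matrix (Fin 2) (Fin 2) ℂ) ⊗ₖ (pauliX ⊗ₖ (1 : Matrix (Bits N) (Bits N) ℂ)))) * Km N
      = Km N * (A ⊗ₖ ((1 : Matrix (Fin 2) (Fin 2) ℂ) ⊗ₖ (pauliZ ⊗ₖ (1 : Matrix (Bits N) (Bits N) ℂ)))) := by
  rw [Km, KS, ← mul_kronecker_mul, ← mul_kronecker_mul, ← mul_kronecker_mul,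
    ← mul_kronecker_mul, ← mul_kronecker_mul, ← mul_kronecker_mul]
  simp only [one_mul, mul_one]
  rw [had_XZ]

lemma commK_Z {N : ℕ} (A : Matrix (Bits N) (Bits N) ℂ) :
    (A ⊗ₖ (pauliZ ⊗ₖ (1 : Matrix (Fin 2 × Bits N) (Fin 2 × Bits N) ℂ))) * Km N
      = Km N * (A ⊗ₖ (pauliZ ⊗ₖ (1 : Matrix (Fin 2 × Bits N) (Fin 2 × Bits N) ℂ))) := by
  rw [Km, KS, ← mul_kronecker_mul, ← mul_kronecker_mul, ← mul_kronecker_mul,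
    ← mul_kronecker_mul]
  simp only [one_mul, mul_one]

lemma sum_kronecker {ι : Type*} (s : Finset ι) {m p : Type*} [Fintype m] [Fintype p]
    (f : ι → Matrix m m ℂ) (B : Matrix p p ℂ) :
    (∑ i ∈ s, f i) ⊗ₖ B = ∑ i ∈ s, (f i ⊗ₖ B) := by
  ext x y
  simp only [kroneckerMap_apply, Matrix.sum_apply, Finset.sum_mul]

lemma submatrix_sum {ι m l : Type*} (s : Finset ι) (f : ι → Matrix m m ℂ) (g : l → m) :
    (∑ i ∈ s, f i).submatrix g g = ∑ i ∈ s, (f i).submatrix g g := by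
  ext x y
  simp only [submatrix_apply, Matrix.sum_apply]

lemma Fm_listprod_aux {n : ℕ} : ∀ (m : ℕ) (g : Fin m → Bits n),
    (List.ofFn fun i => Fm (g i)).prod = Fm (∑ i, g i) := by
  intro m
  induction m with
  | zero => intro g; simp [Fm_zero]
  | succ m ih =>
    intro g
    rw [List.ofFn_succ, List.prod_cons, ih, Fm_mul, ← Fin.sum_univ_succ]

lemma Fm_listprod {n : ℕ} :
    (List.ofFn fun i : Fin n => pauliAt pauliX i).prod = Fm (fun _ => 1) := by
  have h1 : (List.ofFn fun i : Fin n => pauliAt pauliX i)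
      = List.ofFn fun i : Fin n => Fm (unitV i) := by
    congr 1
    funext i
    exact pauliAt_X' i
  rw [h1, Fm_listprod_aux]
  have h2 : (∑ i : Fin n, unitV i) = (fun _ => (1 : Fin 2)) := by
    funext k
    rw [Finset.sum_apply]
    simp only [unitV]
    rw [Finset.sum_ite_eq Finset.univ k (fun _ => (1 : Fin 2))]
    simp
  rw [h2]

lemma diag_sec_c {N : ℕ} :
    Matrix.diagonal (fun s : Sec N => zsign s.2.1)
      = (1 : Matrix (Fin 2) (Fin 2) ℂ) ⊗ₖ (pauliZ ⊗ₖ (1 : Matrix (Bits N) (Bits N) ℂ)) := by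
  conv_rhs => rw [← Matrix.diagonal_one, pauliZ_diag, ← Matrix.diagonal_one,
    diagonal_kronecker_diagonal, diagonal_kronecker_diagonal]
  exact congrArg _ (funext fun s => by simp)

lemma diag_sec_q {N : ℕ} :
    Matrix.diagonal (fun s : Sec N => zsign s.1)
      = pauliZ ⊗ₖ (1 : Matrix (Fin 2 × Bits N) (Fin 2 × Bits N) ℂ) := by
  conv_rhs => rw [← Matrix.diagonal_one, pauliZ_diag, diagonal_kronecker_diagonal]
  exact congrArg _ (funext fun s => by simp)

lemma coe_sign_c (c : Fin 2) : (((if c = 0 then 1 else -1 : ℝ)) : ℂ) = zsign c := by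
  rcases fin2cases c with h | h <;> subst h <;>
    simp (config := { decide := true }) only [zsign, if_true, if_false] <;> try norm_num

lemma mem_spectrum_iff_det {m : Type*} [Fintype m] [DecidableEq m] (A : Matrix m m ℂ) (lam : ℂ) :
    lam ∈ spectrum ℂ A ↔ (Matrix.scalar m lam - A).det = 0 := by
  rw [spectrum.mem_iff, Matrix.isUnit_iff_isUnit_det, isUnit_iff_ne_zero, not_not]
  have h : (algebraMap ℂ (Matrix m m ℂ)) lam = Matrix.scalar m lam := by
    rw [Matrix.algebraMap_eq_diagonal, Matrix.scalar_apply]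
    rfl
  rw [h]

lemma scalar_blockDiag {N : ℕ} (lam : ℂ) :
    Matrix.scalar (Idx N) lam
      = Matrix.blockDiagonal (fun _ : Sec N => Matrix.scalar (Bits N) lam) := by
  ext x y
  obtain ⟨i, a⟩ := x
  obtain ⟨j, b⟩ := y
  rw [Matrix.blockDiagonal_apply, Matrix.scalar_apply, Matrix.scalar_apply,
    Matrix.diagonal_apply, Matrix.diagonal_apply]
  by_cases hab : a = b
  · subst hab
    simp [Prod.ext_iff]
  · rw [if_neg (by simp [Prod.ext_iff, hab]), if_neg hab]

lemma bd_neg {o m : Type*} [Fintype o] [DecidableEq o] [Fintype m] [DecidableEq m]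
    (g : o → Matrix m m ℂ) :
    Matrix.blockDiagonal (fun s => -(g s)) = -(Matrix.blockDiagonal g) := by
  rw [← Matrix.blockDiagonal_neg]
  rfl

lemma bd_add {o m : Type*} [Fintype o] [DecidableEq o] [Fintype m] [DecidableEq m]
    (g h : o → Matrix m m ℂ) :
    Matrix.blockDiagonal (fun s => g s + h s)
      = Matrix.blockDiagonal g + Matrix.blockDiagonal h := by
  rw [← Matrix.blockDiagonal_add]
  rfl

lemma sign_mem (c : Fin 2) : (if c = 0 then (1:ℝ) else -1) ∈ ({-1, 1} : Set ℝ) := by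
  rcases fin2cases c with h | h <;> subst h <;> simp

lemma sign_roundtrip (r : ℝ) (hr : r ∈ ({-1, 1} : Set ℝ)) :
    (if ((if r = 1 then (0 : Fin 2) else 1) = 0) then (1:ℝ) else -1) = r := by
  rcases hr with h | h <;> subst h <;> norm_num

lemma submatrix_neg' {m l : Type*} (A : Matrix m m ℂ) (g : l → m) :
    (-A).submatrix g g = -(A.submatrix g g) := rfl

lemma submatrix_add' {m l : Type*} (A B : Matrix m m ℂ) (g : l → m) :
    (A + B).submatrix g g = A.submatrix g g + B.submatrix g g := rfl

lemma submatrix_sub' {m l : Type*} (A B : Matrix m m ℂ) (g : l → m) :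
    (A - B).submatrix g g = A.submatrix g g - B.submatrix g g := rfl

end PenaltyAux

open PenaltyAux Matrix Kronecker in
/-- The spectrum of the `(2N+2)`-qubit penalty Hamiltonian
`H_p = -(Σ_{i=1}^{N+1} X_{2i-1}X_{2i} + Σ_{i=1}^N Z_{2i}Z_{2i+1} + Z_{2N+2}Z₁)` is the
union, over the four sign choices `s_x, s_z ∈ {-1,+1}`, of the spectra of the
`N`-qubit Hamiltonians
`H(s_x,s_z) = -(Σ_{i=1}^N X_i + s_x·X₁⋯X_N + Z₁ + Σ_{i=1}^{N-1} Z_iZ_{i+1} + s_z·Z_N)`. -/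
theorem penalty_spectrum_as_union_of_sectors
    (N : ℕ) (hN : 1 ≤ N)
    (Hp : Matrix (Fin (2 * N + 2) → Fin 2) (Fin (2 * N + 2) → Fin 2) ℂ)
    (hHpdef : Hp =
      -((∑ i : Fin (N + 1),
          pauliAt pauliX ⟨2 * (i : ℕ), by have := i.isLt; omega⟩ *
          pauliAt pauliX ⟨2 * (i : ℕ) + 1, by have := i.isLt; omega⟩) +
        (∑ i : Fin N,
          pauliAt pauliZ ⟨2 * (i : ℕ) + 1, by have := i.isLt; omega⟩ *
          pauliAt pauliZ ⟨2 * (i : ℕ) + 2, by have := i.isLt; omega⟩) +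
        pauliAt pauliZ ⟨2 * N + 1, by omega⟩ * pauliAt pauliZ ⟨0, by omega⟩))
    (H : ℝ → ℝ → Matrix (Fin N → Fin 2) (Fin N → Fin 2) ℂ)
    (hHdef : ∀ sx sz : ℝ, H sx sz =
      -((∑ i : Fin N, pauliAt pauliX i) +
        ((sx : ℝ) : ℂ) • (List.ofFn fun i : Fin N => pauliAt pauliX i).prod +
        pauliAt pauliZ ⟨0, by omega⟩ +
        (∑ i : Fin (N - 1),
          pauliAt pauliZ ⟨(i : ℕ), by have := i.isLt; omega⟩ *
          pauliAt pauliZ ⟨(i : ℕ) + 1, by have := i.isLt; omega⟩) +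
        ((sz : ℝ) : ℂ) • pauliAt pauliZ ⟨N - 1, by omega⟩)) :
    spectrum ℂ Hp =
      ⋃ sx ∈ ({-1, 1} : Set ℝ), ⋃ sz ∈ ({-1, 1} : Set ℝ), spectrum ℂ (H sx sz) := by
  obtain ⟨M, rfl⟩ : ∃ M, N = M + 1 := ⟨N - 1, by omega⟩
  simp only [Nat.add_sub_cancel] at hHdef
  -- the sector Hamiltonians
  set f : Sec (M+1) → Matrix (Bits (M+1)) (Bits (M+1)) ℂ :=
    fun s => H (if s.2.1 = 0 then 1 else -1) (if s.1 = 0 then 1 else -1) with hfdef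
  -- transported form of Hp
  have hSA : (∑ i : Fin (M + 1 + 1),
        pauliAt pauliX ⟨2 * (i : ℕ), by have := i.isLt; omega⟩ *
        pauliAt pauliX ⟨2 * (i : ℕ) + 1, by have := i.isLt; omega⟩).submatrix
          (sig (M+1)) (sig (M+1))
      = (∑ i : Fin (M+1), Fm (unitV i)) ⊗ₖ (1 : Matrix (Sec (M+1)) (Sec (M+1)) ℂ)
        + Fm (fun _ => 1) ⊗ₖ ((1 : Matrix (Fin 2) (Fin 2) ℂ)
            ⊗ₖ (pauliX ⊗ₖ (1 : Matrix (Bits (M+1)) (Bits (M+1)) ℂ))) := by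
    rw [submatrix_sum, Fin.sum_univ_castSucc]
    congr 1
    · rw [sum_kronecker]
      refine Finset.sum_congr rfl fun i _ => ?_
      simp only [Fin.coe_castSucc]
      rw [pauliAt_X', pauliAt_X', Fm_mul, ← sig_unit i, Fm_submatrix]
      dsimp only
      rw [F2_zero, Fm_zero, Matrix.one_kronecker_one, Matrix.one_kronecker_one]
    · simp only [Fin.val_last]
      rw [pauliAt_X', pauliAt_X', Fm_mul, ← sig_allone, Fm_submatrix]
      dsimp only
      rw [F2_zero, F2_one, Fm_zero]
  have hSB : (∑ i : Fin (M + 1),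
        pauliAt pauliZ ⟨2 * (i : ℕ) + 1, by have := i.isLt; omega⟩ *
        pauliAt pauliZ ⟨2 * (i : ℕ) + 2, by have := i.isLt; omega⟩).submatrix
          (sig (M+1)) (sig (M+1))
      = (∑ i : Fin M, Matrix.diagonal (fun u : Bits (M+1) =>
            zsign (u ⟨(i : ℕ), by have := i.isLt; omega⟩) * zsign (u ⟨(i : ℕ) + 1, by have := i.isLt; omega⟩)))
          ⊗ₖ (1 : Matrix (Sec (M+1)) (Sec (M+1)) ℂ)
        + Matrix.diagonal (fun u : Bits (M+1) => zsign (u ⟨M, by omega⟩))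
            ⊗ₖ (pauliZ ⊗ₖ (1 : Matrix (Fin 2 × Bits (M+1)) (Fin 2 × Bits (M+1)) ℂ)) := by
    rw [submatrix_sum, Fin.sum_univ_castSucc]
    congr 1
    · rw [sum_kronecker]
      refine Finset.sum_congr rfl fun i _ => ?_
      simp only [Fin.coe_castSucc]
      rw [pauliAt_Z, pauliAt_Z, diagonal_mul_diagonal, diag_submatrixP, ← diag_kron_U]
      exact congrArg Matrix.diagonal
        (funext fun x => chi_B (N := M+1) ⟨(i : ℕ), by have := i.isLt; omega⟩
          ⟨(i : ℕ) + 1, by have := i.isLt; omega⟩ rfl x)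
    · simp only [Fin.val_last]
      rw [pauliAt_Z, pauliAt_Z, diagonal_mul_diagonal, diag_submatrixP, pauliZ_diag,
        ← diag_kron_UQ]
      exact congrArg Matrix.diagonal (funext fun x => chi_Blast (by omega) x)
  have hC : (pauliAt pauliZ ⟨2 * (M+1) + 1, by omega⟩
        * pauliAt pauliZ ⟨0, by omega⟩).submatrix (sig (M+1)) (sig (M+1))
      = Matrix.diagonal (fun u : Bits (M+1) => zsign (u ⟨0, by omega⟩))
          ⊗ₖ (1 : Matrix (Sec (M+1)) (Sec (M+1)) ℂ) := by
    rw [pauliAt_Z, pauliAt_Z, diagonal_mul_diagonal, diag_submatrixP, ← diag_kron_U]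
    exact congrArg Matrix.diagonal (funext fun x => chi_C (by omega) x)
  have hHp : Hp.submatrix (sig (M+1)) (sig (M+1)) =
      -(((∑ i : Fin (M+1), Fm (unitV i)) ⊗ₖ (1 : Matrix (Sec (M+1)) (Sec (M+1)) ℂ)
          + Fm (fun _ => 1) ⊗ₖ ((1 : Matrix (Fin 2) (Fin 2) ℂ)
              ⊗ₖ (pauliX ⊗ₖ (1 : Matrix (Bits (M+1)) (Bits (M+1)) ℂ))))
        + ((∑ i : Fin M, Matrix.diagonal (fun u : Bits (M+1) =>
              zsign (u ⟨(i : ℕ), by have := i.isLt; omega⟩) * zsign (u ⟨(i : ℕ) + 1, by have := i.isLt; omega⟩)))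
            ⊗ₖ (1 : Matrix (Sec (M+1)) (Sec (M+1)) ℂ)
          + Matrix.diagonal (fun u : Bits (M+1) => zsign (u ⟨M, by omega⟩))
              ⊗ₖ (pauliZ ⊗ₖ (1 : Matrix (Fin 2 × Bits (M+1)) (Fin 2 × Bits (M+1)) ℂ)))
        + Matrix.diagonal (fun u : Bits (M+1) => zsign (u ⟨0, by omega⟩))
            ⊗ₖ (1 : Matrix (Sec (M+1)) (Sec (M+1)) ℂ)) := by
    rw [hHpdef, submatrix_neg', submatrix_add', submatrix_add', hSA, hSB, hC]
  -- block-diagonal form of the sector Hamiltonians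
  have hD : Matrix.blockDiagonal f =
      -(((∑ i : Fin (M+1), Fm (unitV i)) ⊗ₖ (1 : Matrix (Sec (M+1)) (Sec (M+1)) ℂ)
          + Fm (fun _ => 1) ⊗ₖ ((1 : Matrix (Fin 2) (Fin 2) ℂ)
              ⊗ₖ (pauliZ ⊗ₖ (1 : Matrix (Bits (M+1)) (Bits (M+1)) ℂ)))
          + Matrix.diagonal (fun u : Bits (M+1) => zsign (u ⟨0, by omega⟩))
              ⊗ₖ (1 : Matrix (Sec (M+1)) (Sec (M+1)) ℂ)
          + (∑ i : Fin M, Matrix.diagonal (fun u : Bits (M+1) =>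
                zsign (u ⟨(i : ℕ), by have := i.isLt; omega⟩) * zsign (u ⟨(i : ℕ) + 1, by have := i.isLt; omega⟩)))
              ⊗ₖ (1 : Matrix (Sec (M+1)) (Sec (M+1)) ℂ)
          + Matrix.diagonal (fun u : Bits (M+1) => zsign (u ⟨M, by omega⟩))
              ⊗ₖ (pauliZ ⊗ₖ (1 : Matrix (Fin 2 × Bits (M+1)) (Fin 2 × Bits (M+1)) ℂ)))) := by
    have hf : f = fun s : Sec (M+1) =>
        -((∑ i : Fin (M+1), pauliAt pauliX i)
          + (((if s.2.1 = 0 then (1:ℝ) else -1) : ℝ) : ℂ) • Fm (fun _ => 1)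
          + pauliAt pauliZ ⟨0, by omega⟩
          + (∑ i : Fin M,
              pauliAt pauliZ ⟨(i : ℕ), by have := i.isLt; omega⟩ *
              pauliAt pauliZ ⟨(i : ℕ) + 1, by have := i.isLt; omega⟩)
          + (((if s.1 = 0 then (1:ℝ) else -1) : ℝ) : ℂ) • pauliAt pauliZ ⟨M, by omega⟩) := by
      funext s
      show H _ _ = _
      rw [hHdef, Fm_listprod]
      rfl
    rw [hf, bd_neg, bd_add, bd_add, bd_add, bd_add]
    rw [blockDiagonal_smulfun, blockDiagonal_smulfun]
    rw [blockDiagonal_const, blockDiagonal_const, blockDiagonal_const]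
    rw [show (∑ i : Fin (M+1), pauliAt pauliX i) = ∑ i : Fin (M+1), Fm (unitV i) from
      Finset.sum_congr rfl fun i _ => pauliAt_X' i]
    rw [pauliAt_Z, pauliAt_Z]
    rw [show (∑ i : Fin M,
          pauliAt pauliZ ⟨(i : ℕ), by have := i.isLt; omega⟩ *
          pauliAt pauliZ ⟨(i : ℕ) + 1, by have := i.isLt; omega⟩)
        = ∑ i : Fin M, Matrix.diagonal (fun u : Bits (M+1) =>
            zsign (u ⟨(i : ℕ), by have := i.isLt; omega⟩)
              * zsign (u ⟨(i : ℕ) + 1, by have := i.isLt; omega⟩)) from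
      Finset.sum_congr rfl fun i _ => by
        rw [pauliAt_Z, pauliAt_Z, diagonal_mul_diagonal]]
    rw [show Matrix.diagonal
          (fun s : Sec (M+1) => (((if s.2.1 = 0 then (1:ℝ) else -1) : ℝ) : ℂ))
        = (1 : Matrix (Fin 2) (Fin 2) ℂ)
            ⊗ₖ (pauliZ ⊗ₖ (1 : Matrix (Bits (M+1)) (Bits (M+1)) ℂ)) from
      (congrArg Matrix.diagonal (funext fun (s : Sec (M+1)) => coe_sign_c s.2.1)).trans diag_sec_c]
    rw [show Matrix.diagonal
          (fun s : Sec (M+1) => (((if s.1 = 0 then (1:ℝ) else -1) : ℝ) : ℂ))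
        = pauliZ ⊗ₖ (1 : Matrix (Fin 2 × Bits (M+1)) (Fin 2 × Bits (M+1)) ℂ) from
      (congrArg Matrix.diagonal (funext fun (s : Sec (M+1)) => coe_sign_c s.1)).trans diag_sec_q]
  -- the conjugation identity
  have hMain : Hp.submatrix (sig (M+1)) (sig (M+1)) * Km (M+1)
      = Km (M+1) * Matrix.blockDiagonal f := by
    rw [hHp, hD]
    simp only [neg_mul, mul_neg, add_mul, mul_add]
    simp only [commK_A, commK_X, commK_Z]
    abel
  -- determinant chain
  have hdetK : (Km (M+1)).det ≠ 0 := det_Km_ne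
  have hdet : ∀ lam : ℂ,
      (Matrix.scalar (Fin (2*(M+1)+2) → Fin 2) lam - Hp).det
        = ∏ s : Sec (M+1), (Matrix.scalar (Bits (M+1)) lam - f s).det := by
    intro lam
    have d1 : (Matrix.scalar (Fin (2*(M+1)+2) → Fin 2) lam - Hp).det
        = ((Matrix.scalar (Fin (2*(M+1)+2) → Fin 2) lam - Hp).submatrix
            (sig (M+1)) (sig (M+1))).det :=
      (Matrix.det_submatrix_equiv_self (Equiv.ofBijective _ (sig_bij (M+1))) _).symm
    have d2 : (Matrix.scalar (Fin (2*(M+1)+2) → Fin 2) lam - Hp).submatrix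
          (sig (M+1)) (sig (M+1))
        = Matrix.scalar (Idx (M+1)) lam - Hp.submatrix (sig (M+1)) (sig (M+1)) := by
      rw [submatrix_sub']
      congr 1
      rw [Matrix.scalar_apply, Matrix.scalar_apply,
        Matrix.submatrix_diagonal (fun _ => lam) (sig (M+1)) (sig_inj (M+1))]
      rfl
    have d3 : (Matrix.scalar (Idx (M+1)) lam - Hp.submatrix (sig (M+1)) (sig (M+1))) * Km (M+1)
        = Km (M+1) * (Matrix.scalar (Idx (M+1)) lam - Matrix.blockDiagonal f) := by
      rw [sub_mul, mul_sub, hMain,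
        (Matrix.scalar_commute lam (fun r' => Commute.all lam r') (Km (M+1))).eq]
    have d4 : (Matrix.scalar (Idx (M+1)) lam - Hp.submatrix (sig (M+1)) (sig (M+1))).det
        = (Matrix.scalar (Idx (M+1)) lam - Matrix.blockDiagonal f).det := by
      have h2 : (Matrix.scalar (Idx (M+1)) lam - Hp.submatrix (sig (M+1)) (sig (M+1))).det
            * (Km (M+1)).det
          = (Matrix.scalar (Idx (M+1)) lam - Matrix.blockDiagonal f).det * (Km (M+1)).det := by
        rw [← Matrix.det_mul, d3, Matrix.det_mul, mul_comm]
      exact mul_right_cancel₀ hdetK h2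
    have d5 : Matrix.scalar (Idx (M+1)) lam - Matrix.blockDiagonal f
        = Matrix.blockDiagonal (fun s => Matrix.scalar (Bits (M+1)) lam - f s) := by
      rw [scalar_blockDiag, ← Matrix.blockDiagonal_sub]
      rfl
    rw [d1, d2, d4, d5, Matrix.det_blockDiagonal]
  -- finish at the level of spectra
  ext lam
  rw [mem_spectrum_iff_det, hdet lam]
  rw [Finset.prod_eq_zero_iff]
  simp only [Set.mem_iUnion, Set.mem_insert_iff, Set.mem_singleton_iff]
  constructor
  · rintro ⟨s, -, hs⟩
    refine ⟨(if s.2.1 = 0 then 1 else -1), ?_, (if s.1 = 0 then 1 else -1), ?_, ?_⟩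
    · simpa using sign_mem s.2.1
    · simpa using sign_mem s.1
    · rw [mem_spectrum_iff_det]
      exact hs
  · rintro ⟨sx, hsx, sz, hsz, hmem⟩
    refine ⟨((if sz = 1 then 0 else 1), (if sx = 1 then 0 else 1), 0), Finset.mem_univ _, ?_⟩
    rw [← mem_spectrum_iff_det]
    have h1 : f ((if sz = 1 then (0:Fin 2) else 1), (if sx = 1 then (0:Fin 2) else 1), 0)
        = H sx sz := by
      show H (if ((if sx = 1 then (0:Fin 2) else 1) = 0) then 1 else -1)
          (if ((if sz = 1 then (0:Fin 2) else 1) = 0) then 1 else -1) = H sx sz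
      rw [sign_roundtrip sx (by simpa using hsx), sign_roundtrip sz (by simpa using hsz)]
    rw [h1]
    exact hmem
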